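/- Let $Y=(Y_t)_{t\in[0,T]}$ be a $d$-dimensional continuous stochastic process whose component processes $Y^1,\dots,Y^d$ are mutually independent. Then $Y$ has conditional full support with respect to its natural filtration $\mathbb{F}^Y$ if and only if each $Y^\nu$ has conditional full support with respect to its natural filtration $\mathbb{F}^{Y^\nu}$, for $\nu=1,\dots,d$. -/

import Mathlib

open MeasureTheory ProbabilityTheory Set
noncomputable section
variable {Ω : Type*}

/-- The small-ball event: the path of `X` on `[t₀,T]` stays `ε`-close to `X t₀ + f`. -/
def sbEvent {E : Type*} [NormedAddCommGroup E] (X : ℝ → Ω → E) (t₀ T ε : ℝ) (f : ℝ → E) : Set Ω :=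
  {ω | ∀ t ∈ Set.Icc t₀ T, ‖X t ω - X t₀ ω - f t‖ < ε}

/-- Conditional full support (conditional small ball property) of the process `X` on `[0,T]`
with respect to the filtration `F`. -/
def HasCFS {E : Type*} [NormedAddCommGroup E] [m0 : MeasurableSpace Ω] (μ : Measure Ω) (T : ℝ)
    (F : ℝ → MeasurableSpace Ω) (X : ℝ → Ω → E) : Prop :=
  ∀ t₀ ∈ Set.Ico (0:ℝ) T, ∀ f : ℝ → E, ContinuousOn f (Set.Icc t₀ T) → f t₀ = 0 →
    ∀ ε > 0, ∀ᵐ ω ∂μ,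
      0 < (μ[(sbEvent X t₀ T ε f).indicator (fun _ => (1:ℝ)) | F t₀]) ω

/-- The natural filtration of a process. -/
def natFilt {E : Type*} [MeasurableSpace E] [MeasurableSpace Ω] (X : ℝ → Ω → E) (t : ℝ) :
    MeasurableSpace Ω := ⨆ s ∈ Set.Iic t, MeasurableSpace.comap (X s) inferInstance

/-- The usual augmentation of a filtration: smallest right-continuous complete enlargement. -/
def usualAug [MeasurableSpace Ω] (μ : Measure Ω) (F : ℝ → MeasurableSpace Ω) (t : ℝ) :
    MeasurableSpace Ω :=
  ⨅ s ∈ Set.Ioi t, (F s ⊔ MeasurableSpace.generateFrom {N : Set Ω | μ N = 0})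

/-- The σ-algebra generated by a whole process. -/
def processSigma {E : Type*} [MeasurableSpace E] [MeasurableSpace Ω] (X : ℝ → Ω → E) :
    MeasurableSpace Ω := ⨆ t : ℝ, MeasurableSpace.comap (X t) inferInstance

/- ### Auxiliary lemmas -/

lemma dense_aux {t₀ T : ℝ} (h : t₀ < T) :
    ∃ D : Set ℝ, D.Countable ∧ D ⊆ Set.Icc t₀ T ∧ Set.Icc t₀ T ⊆ closure D := by
  refine ⟨Set.Icc t₀ T ∩ Set.range ((↑) : ℚ → ℝ) ∪ {t₀, T}, ?_, ?_, ?_⟩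
  · exact ((Set.countable_range _).mono Set.inter_subset_right).union
      ((Set.countable_singleton T).insert t₀)
  · rintro x (⟨hx, -⟩ | hx)
    · exact hx
    · rcases hx with rfl | rfl
      · exact Set.left_mem_Icc.2 h.le
      · exact Set.right_mem_Icc.2 h.le
  · intro x hx
    have h1 : Set.Icc t₀ T = closure (Set.Ioo t₀ T) := (closure_Ioo h.ne).symm
    have hd : Dense (Set.range ((↑) : ℚ → ℝ)) := Rat.denseRange_cast
    have h2 : Set.Ioo t₀ T ⊆ closure (Set.Ioo t₀ T ∩ Set.range ((↑) : ℚ → ℝ)) :=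
      hd.open_subset_closure_inter isOpen_Ioo
    have h3 : Set.Ioo t₀ T ∩ Set.range ((↑) : ℚ → ℝ) ⊆
        Set.Icc t₀ T ∩ Set.range ((↑) : ℚ → ℝ) ∪ {t₀, T} :=
      fun y hy => Or.inl ⟨Set.Ioo_subset_Icc_self hy.1, hy.2⟩
    have := closure_mono (h2.trans (closure_mono h3))
    rw [closure_closure] at this
    rw [h1] at hx
    exact this hx

lemma sbEvent_eq {E : Type*} [NormedAddCommGroup E] (X : ℝ → Ω → E) {t₀ T : ℝ} (h : t₀ < T)
    (ε : ℝ) (f : ℝ → E) (hX : ∀ ω, ContinuousOn (fun t => X t ω) (Set.Icc t₀ T))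
    (hf : ContinuousOn f (Set.Icc t₀ T)) {D : Set ℝ} (hDc : D ⊆ Set.Icc t₀ T)
    (hDd : Set.Icc t₀ T ⊆ closure D) :
    sbEvent X t₀ T ε f =
      ⋃ n : ℕ, ⋂ t ∈ D, {ω | ‖X t ω - X t₀ ω - f t‖ ≤ ε - 1/(n+1)} := by
  ext ω
  have hg : ContinuousOn (fun t => ‖X t ω - X t₀ ω - f t‖) (Set.Icc t₀ T) :=
    (((hX ω).sub continuousOn_const).sub hf).norm
  constructor
  · intro hω
    obtain ⟨t', ht', hmax⟩ := isCompact_Icc.exists_isMaxOn (Set.nonempty_Icc.2 h.le) hg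
    have hlt : ‖X t' ω - X t₀ ω - f t'‖ < ε := hω t' ht'
    obtain ⟨n, hn⟩ := exists_nat_one_div_lt (sub_pos.2 hlt)
    refine Set.mem_iUnion.2 ⟨n, Set.mem_iInter₂.2 fun t ht => ?_⟩
    have := hmax (hDc ht)
    simp only [Set.mem_setOf_eq] at this ⊢
    linarith
  · intro hω t ht
    obtain ⟨n, hn⟩ := Set.mem_iUnion.1 hω
    have hn' := Set.mem_iInter₂.1 hn
    have key : ‖X t ω - X t₀ ω - f t‖ ≤ ε - 1/(n+1) := by
      obtain ⟨u, huD, hu⟩ := mem_closure_iff_seq_limit.1 (hDd ht)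
      have hu' : Filter.Tendsto u Filter.atTop (nhdsWithin t (Set.Icc t₀ T)) :=
        tendsto_nhdsWithin_of_tendsto_nhds_of_eventually_within u hu
          (Filter.Eventually.of_forall fun k => hDc (huD k))
      have htd : Filter.Tendsto (fun k => ‖X (u k) ω - X t₀ ω - f (u k)‖) Filter.atTop
          (nhds ‖X t ω - X t₀ ω - f t‖) := ((hg.continuousWithinAt ht).tendsto).comp hu'
      exact le_of_tendsto htd (Filter.Eventually.of_forall fun k => hn' (u k) (huD k))
    have : (0:ℝ) < 1/(n+1) := by positivity
    linarith

lemma measurableSet_sbEvent {E : Type*} [NormedAddCommGroup E] {m : MeasurableSpace Ω}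
    (X : ℝ → Ω → E) {t₀ T : ℝ} (h : t₀ < T) (ε : ℝ) (f : ℝ → E)
    (hX : ∀ ω, ContinuousOn (fun t => X t ω) (Set.Icc t₀ T))
    (hf : ContinuousOn f (Set.Icc t₀ T))
    (hm : ∀ t ∈ Set.Icc t₀ T, Measurable[m] (fun ω => ‖X t ω - X t₀ ω - f t‖)) :
    MeasurableSet[m] (sbEvent X t₀ T ε f) := by
  obtain ⟨D, hDcnt, hDc, hDd⟩ := dense_aux h
  rw [sbEvent_eq X h ε f hX hf hDc hDd]
  exact MeasurableSet.iUnion fun n => MeasurableSet.biInter hDcnt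
    fun t ht => (hm t (hDc ht)) measurableSet_Iic

lemma setIntegral_pos_of_ae_pos {m0 : MeasurableSpace Ω} {μ : Measure Ω} {k : Ω → ℝ}
    (hk : Integrable k μ) (hpos : ∀ᵐ ω ∂μ, 0 < k ω) {B : Set Ω}
    (hμB : 0 < μ B) : 0 < ∫ ω in B, k ω ∂μ := by
  have h0 : 0 ≤ᵐ[μ.restrict B] k := ae_restrict_of_ae (hpos.mono fun ω h => h.le)
  have hi : IntegrableOn k B μ := hk.integrableOn
  rcases lt_or_ge 0 (∫ ω in B, k ω ∂μ) with h | h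
  · exact h
  · exfalso
    have hz : ∫ ω in B, k ω ∂μ = 0 := le_antisymm h (setIntegral_nonneg_of_ae_restrict h0)
    have hk0 : k =ᵐ[μ.restrict B] 0 := (setIntegral_eq_zero_iff_of_nonneg_ae h0 hi).1 hz
    have hkp : ∀ᵐ ω ∂μ.restrict B, 0 < k ω := ae_restrict_of_ae hpos
    have : ∀ᵐ (_ : Ω) ∂μ.restrict B, False := by
      filter_upwards [hk0, hkp] with ω h1 h2
      simp [h1] at h2
    have := ae_iff.1 this
    simp only [not_false_iff, setOf_true] at this
    rw [Measure.restrict_apply_univ] at this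
    exact hμB.ne' this

lemma condexp_pos_of_setIntegral_pos {m m0 : MeasurableSpace Ω} (hm : m ≤ m0) {μ : Measure Ω}
    [IsFiniteMeasure μ] {g : Ω → ℝ} (hg : Integrable g μ)
    (hpos : ∀ B : Set Ω, MeasurableSet[m] B → 0 < μ B → 0 < ∫ ω in B, g ω ∂μ) :
    ∀ᵐ ω ∂μ, 0 < (μ[g|m]) ω := by
  set N := {ω | (μ[g|m]) ω ≤ 0} with hN
  have hNm : MeasurableSet[m] N := by
    have : N = (μ[g|m]) ⁻¹' Set.Iic 0 := rfl
    rw [this]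
    exact stronglyMeasurable_condExp.measurable measurableSet_Iic
  have hμN : μ N = 0 := by
    by_contra hne
    have hpos' := hpos N hNm (pos_iff_ne_zero.2 hne)
    have h2 : ∫ ω in N, g ω ∂μ = ∫ ω in N, (μ[g|m]) ω ∂μ := (setIntegral_condExp hm hg hNm).symm
    have h3 : ∫ ω in N, (μ[g|m]) ω ∂μ ≤ 0 :=
      setIntegral_nonpos (hm _ hNm) fun ω hω => hω
    rw [h2] at hpos'
    exact absurd h3 (not_le.2 hpos')
  have : ∀ᵐ ω ∂μ, ω ∉ N := by
    rw [ae_iff]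
    simpa using hμN
  exact this.mono fun ω h => lt_of_not_ge h

lemma iIndep_integral_prod {ι : Type*} {m0 : MeasurableSpace Ω} {μ : Measure Ω}
    [IsProbabilityMeasure μ] {S : ι → MeasurableSpace Ω} (hle : ∀ i, S i ≤ m0)
    (hindep : ProbabilityTheory.iIndep S μ) (g : ι → Ω → ℝ)
    (hmeas : ∀ i, StronglyMeasurable[S i] (g i)) (hint : ∀ i, Integrable (g i) μ)
    (s : Finset ι) :
    Integrable (fun ω => ∏ i ∈ s, g i ω) μ ∧
      ∫ ω, (∏ i ∈ s, g i ω) ∂μ = ∏ i ∈ s, ∫ ω, g i ω ∂μ := by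
  classical
  induction s using Finset.induction_on with
  | empty => simp
  | @insert j s hj IH =>
    have hIndep2 : ProbabilityTheory.Indep (S j) (⨆ i ∈ (s : Set ι), S i) μ := by
      have h := ProbabilityTheory.indep_biSup_compl hle hindep {j}
      have h1 : (⨆ n ∈ ({j} : Set ι), S n) = S j := by simp
      rw [h1] at h
      refine ProbabilityTheory.indep_of_indep_of_le_right h ?_
      refine iSup₂_le fun i hi => ?_
      have : i ∈ ({j} : Set ι)ᶜ := by
        simp only [Set.mem_compl_iff, Set.mem_singleton_iff]
        rintro rfl; exact hj hi
      exact le_iSup₂ (f := fun n (_ : n ∈ ({j} : Set ι)ᶜ) => S n) i this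
    have hmono : StronglyMeasurable[⨆ i ∈ (s : Set ι), S i] (fun ω => ∏ i ∈ s, g i ω) := by
      refine Finset.stronglyMeasurable_fun_prod s fun i hi => (hmeas i).mono ?_
      exact le_iSup₂ (f := fun n (_ : n ∈ (s : Set ι)) => S n) i (by simpa using hi)
    have hIF : ProbabilityTheory.IndepFun (g j) (fun ω => ∏ i ∈ s, g i ω) μ := by
      have h1 : MeasurableSpace.comap (g j) inferInstance ≤ S j :=
        (hmeas j).measurable.comap_le
      have h2 : MeasurableSpace.comap (fun ω => ∏ i ∈ s, g i ω) inferInstance ≤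
          ⨆ i ∈ (s : Set ι), S i := hmono.measurable.comap_le
      exact ProbabilityTheory.indep_of_indep_of_le_right
        (ProbabilityTheory.indep_of_indep_of_le_left hIndep2 h1) h2
    have hintP : Integrable (fun ω => ∏ i ∈ s, g i ω) μ := IH.1
    have hmul : Integrable (g j * fun ω => ∏ i ∈ s, g i ω) μ :=
      hIF.integrable_mul (hint j) hintP
    constructor
    · refine hmul.congr (Filter.Eventually.of_forall fun ω => ?_)
      simp [Finset.prod_insert hj]
    · have hmi := hIF.integral_mul_eq_mul_integral ((hint j).aestronglyMeasurable) hintP.aestronglyMeasurable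
      have heq : ∫ ω, (∏ i ∈ insert j s, g i ω) ∂μ =
          ∫ ω, (g j * fun ω => ∏ i ∈ s, g i ω) ω ∂μ := by
        refine integral_congr_ae (Filter.Eventually.of_forall fun ω => ?_)
        simp [Finset.prod_insert hj]
      rw [heq, hmi, IH.2, Finset.prod_insert hj]

lemma comap_euclidean {d : ℕ} [m0 : MeasurableSpace Ω] (Z : Ω → EuclideanSpace ℝ (Fin d)) :
    MeasurableSpace.comap Z inferInstance =
      ⨆ i : Fin d, MeasurableSpace.comap (fun ω => Z ω i) inferInstance := by
  have h : (inferInstance : MeasurableSpace (EuclideanSpace ℝ (Fin d))) =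
      ⨆ i : Fin d, MeasurableSpace.comap (fun x : EuclideanSpace ℝ (Fin d) => x i)
        inferInstance := by
    rw [show (inferInstance : MeasurableSpace (EuclideanSpace ℝ (Fin d))) =
      MeasurableSpace.comap WithLp.ofLp MeasurableSpace.pi from rfl, MeasurableSpace.pi,
      MeasurableSpace.comap_iSup]
    simp only [MeasurableSpace.comap_comp]
    rfl
  rw [h, MeasurableSpace.comap_iSup]
  simp only [MeasurableSpace.comap_comp]
  rfl

lemma natFilt_pi {d : ℕ} [m0 : MeasurableSpace Ω] (Y : ℝ → Ω → EuclideanSpace ℝ (Fin d))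
    (t : ℝ) : natFilt Y t = ⨆ i : Fin d, natFilt (fun s ω => Y s ω i) t := by
  unfold natFilt
  simp_rw [comap_euclidean]
  rw [iSup_comm]
  congr 1
  ext s
  rw [iSup_comm]

lemma abs_coord_le_norm {d : ℕ} (i : Fin d) (x : EuclideanSpace ℝ (Fin d)) : |x i| ≤ ‖x‖ := by
  rw [EuclideanSpace.norm_eq]
  have h1 : |x i| = Real.sqrt (|x i|^2) := by rw [Real.sqrt_sq_eq_abs]; simp
  rw [h1]
  apply Real.sqrt_le_sqrt
  have : |x i|^2 = ‖x i‖^2 := by simp [Real.norm_eq_abs]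
  rw [this]
  exact Finset.single_le_sum (f := fun j => ‖x j‖^2) (fun j _ => by positivity) (Finset.mem_univ i)

/-- a continuous process with mutually independent components has CFS with
respect to its natural filtration iff each component has CFS with respect to its own
natural filtration. -/
theorem cfs_iff_components_independent
    {m0 : MeasurableSpace Ω} (μ : Measure Ω) [IsProbabilityMeasure μ]
    (T : ℝ) (hT : 0 < T) (d : ℕ)
    (Y : ℝ → Ω → EuclideanSpace ℝ (Fin d))
    (hYcont : ∀ ω, Continuous fun t => Y t ω)
    (hYmeas : ∀ t : ℝ, Measurable (Y t))
    (hindep : ProbabilityTheory.iIndep (fun i : Fin d => processSigma (fun t ω => Y t ω i)) μ) :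
    HasCFS μ T (natFilt Y) Y ↔
      ∀ i : Fin d, HasCFS μ T (natFilt (fun t ω => Y t ω i)) (fun t ω => Y t ω i) := by
  classical
  -- notation and basic measurability facts
  set S : Fin d → MeasurableSpace Ω := fun i => processSigma (fun t ω => Y t ω i) with hS
  have hYimeas : ∀ (i : Fin d) (t : ℝ), Measurable (fun ω => Y t ω i) :=
    fun i t => (measurable_pi_apply i).comp ((WithLp.measurable_ofLp _ _).comp (hYmeas t))
  have hSile : ∀ i, S i ≤ m0 := fun i => iSup_le fun t => (hYimeas i t).comap_le
  have hYiSi : ∀ (i : Fin d) (t : ℝ), Measurable[S i] (fun ω => Y t ω i) := fun i t =>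
    Measurable.of_comap_le (le_iSup (fun t => MeasurableSpace.comap (fun ω => Y t ω i)
      inferInstance) t)
  have hGile : ∀ (i : Fin d) (t : ℝ), natFilt (fun s ω => Y s ω i) t ≤ S i := fun i t =>
    iSup₂_le fun s _ => le_iSup (fun u => MeasurableSpace.comap (fun ω => Y u ω i)
      inferInstance) s
  have hGim0 : ∀ (i : Fin d) (t : ℝ), natFilt (fun s ω => Y s ω i) t ≤ m0 := fun i t =>
    (hGile i t).trans (hSile i)
  have hmm0 : ∀ t, natFilt Y t ≤ m0 := fun t => iSup₂_le fun s _ => (hYmeas s).comap_le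
  have hYicont : ∀ (i : Fin d) ω, Continuous fun t => Y t ω i := fun i ω =>
    (PiLp.continuous_apply 2 _ i).comp (hYcont ω)
  constructor
  · -- forward direction
    intro hJ i t₀ ht₀ f hf hf0 ε hε
    set F : ℝ → EuclideanSpace ℝ (Fin d) :=
      fun t => f t • EuclideanSpace.single i (1:ℝ) with hFdef
    have hFcont : ContinuousOn F (Set.Icc t₀ T) := hf.smul continuousOn_const
    have hF0 : F t₀ = 0 := by simp [hFdef, hf0]
    have hJ' := hJ t₀ ht₀ F hFcont hF0 ε hε
    have hsub : sbEvent Y t₀ T ε F ⊆ sbEvent (fun t ω => Y t ω i) t₀ T ε f := by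
      intro ω hω t ht
      have h1 := hω t ht
      have h2 : (Y t ω - Y t₀ ω - F t) i = Y t ω i - Y t₀ ω i - f t := by
        simp [hFdef, EuclideanSpace.single_apply]
      calc ‖Y t ω i - Y t₀ ω i - f t‖ = |(Y t ω - Y t₀ ω - F t) i| := by
            rw [h2]; rfl
        _ ≤ ‖Y t ω - Y t₀ ω - F t‖ := abs_coord_le_norm i _
        _ < ε := h1
    have hEFmeas : MeasurableSet (sbEvent Y t₀ T ε F) :=
      measurableSet_sbEvent Y ht₀.2 ε F (fun ω => (hYcont ω).continuousOn) hFcont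
        (fun t _ => (((hYmeas t).sub (hYmeas t₀)).sub measurable_const).norm)
    have hEimeas : MeasurableSet (sbEvent (fun t ω => Y t ω i) t₀ T ε f) :=
      measurableSet_sbEvent _ ht₀.2 ε f (fun ω => (hYicont i ω).continuousOn) hf
        (fun t _ => (((hYimeas i t).sub (hYimeas i t₀)).sub measurable_const).norm)
    have hintF : Integrable ((sbEvent Y t₀ T ε F).indicator (fun _ => (1:ℝ))) μ :=
      (integrable_const (1:ℝ)).indicator hEFmeas
    have hinti : Integrable ((sbEvent (fun t ω => Y t ω i) t₀ T ε f).indicator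
        (fun _ => (1:ℝ))) μ := (integrable_const (1:ℝ)).indicator hEimeas
    have hle : (sbEvent Y t₀ T ε F).indicator (fun _ => (1:ℝ)) ≤ᵐ[μ]
        (sbEvent (fun t ω => Y t ω i) t₀ T ε f).indicator (fun _ => (1:ℝ)) :=
      Filter.Eventually.of_forall
        (Set.indicator_le_indicator_of_subset hsub (fun _ => zero_le_one))
    have hmono := condExp_mono (m := natFilt Y t₀) hintF hinti hle
    have hposJ : ∀ᵐ ω ∂μ, 0 < (μ[(sbEvent (fun t ω => Y t ω i) t₀ T ε f).indicator
        (fun _ => (1:ℝ)) | natFilt Y t₀]) ω := by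
      filter_upwards [hJ', hmono] with ω h1 h2
      exact lt_of_lt_of_le h1 h2
    refine condexp_pos_of_setIntegral_pos (hGim0 i t₀) hinti ?_
    intro B hB hμB
    have hBJ : MeasurableSet[natFilt Y t₀] B := by
      have : natFilt (fun s ω => Y s ω i) t₀ ≤ natFilt Y t₀ := by
        rw [natFilt_pi]
        exact le_iSup (fun j => natFilt (fun s ω => Y s ω j) t₀) i
      exact this _ hB
    rw [← setIntegral_condExp (hmm0 t₀) hinti hBJ]
    exact setIntegral_pos_of_ae_pos integrable_condExp hposJ hμB
  · -- backward direction
    intro hC t₀ ht₀ f hf hf0 ε hε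
    have hm : natFilt Y t₀ ≤ m0 := hmm0 t₀
    set G : Fin d → MeasurableSpace Ω := fun i => natFilt (fun s ω => Y s ω i) t₀ with hGdef
    have hmeq : natFilt Y t₀ = ⨆ i, G i := natFilt_pi Y t₀
    set ε' : ℝ := ε / ((d:ℝ)+1) with hε'def
    have hε' : 0 < ε' := by positivity
    set A : Fin d → Set Ω := fun i => sbEvent (fun t ω => Y t ω i) t₀ T ε' (fun t => f t i)
      with hAdef
    set Cset : Set Ω := ⋂ i, A i with hCsetdef
    have hficont : ∀ i : Fin d, ContinuousOn (fun t => f t i) (Set.Icc t₀ T) := fun i =>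
      (PiLp.continuous_apply 2 _ i).comp_continuousOn hf
    have hfi0 : ∀ i : Fin d, f t₀ i = 0 := fun i => by rw [hf0]; rfl
    have hcepos : ∀ i : Fin d, ∀ᵐ ω ∂μ, 0 < (μ[(A i).indicator (fun _ => (1:ℝ)) | G i]) ω :=
      fun i => hC i t₀ ht₀ _ (hficont i) (hfi0 i) ε' hε'
    have hASi : ∀ i, MeasurableSet[S i] (A i) := fun i =>
      measurableSet_sbEvent (m := S i) _ ht₀.2 ε' _ (fun ω => (hYicont i ω).continuousOn)
        (hficont i) (fun t _ => by
          letI : MeasurableSpace Ω := S i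
          exact (((hYiSi i t).sub (hYiSi i t₀)).sub measurable_const).norm)
    have hAm0 : ∀ i, MeasurableSet (A i) := fun i => hSile i _ (hASi i)
    have hCm0 : MeasurableSet Cset := MeasurableSet.iInter hAm0
    have hCint : Integrable (Cset.indicator (fun _ => (1:ℝ))) μ :=
      (integrable_const 1).indicator hCm0
    have hAint : ∀ i, Integrable ((A i).indicator (fun _ => (1:ℝ))) μ := fun i =>
      (integrable_const 1).indicator (hAm0 i)
    set h : Fin d → Ω → ℝ := fun i => μ[(A i).indicator (fun _ => (1:ℝ)) | G i] with hhdef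
    have hhSM : ∀ i, StronglyMeasurable[S i] (h i) := fun i =>
      stronglyMeasurable_condExp.mono (hGile i t₀)
    have hhint : ∀ i, Integrable (h i) μ := fun i => integrable_condExp
    -- hce positivity of the product
    have hprodpos : ∀ᵐ ω ∂μ, 0 < ∏ i, h i ω := by
      have hall : ∀ᵐ ω ∂μ, ∀ i, 0 < h i ω := (ae_all_iff).2 hcepos
      exact hall.mono fun ω hω => Finset.prod_pos fun i _ => hω i
    -- the π-system and the key integral identity
    have hgen : natFilt Y t₀ = MeasurableSpace.generateFrom
        (piiUnionInter (fun i => {s | MeasurableSet[G i] s}) Set.univ) := by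
      have hpz := generateFrom_piiUnionInter_measurableSet G Set.univ
      rw [iSup_univ] at hpz
      rw [hmeq, ← hpz]
    have hbasic : ∀ B ∈ piiUnionInter (fun i => {s | MeasurableSet[G i] s}) Set.univ,
        ∫ ω in B, (∏ i, h i ω) ∂μ = ∫ ω in B, Cset.indicator (fun _ => (1:ℝ)) ω ∂μ := by
      rintro B ⟨t, -, fI, hfI, rfl⟩
      set B' : Fin d → Set Ω := fun i => if i ∈ t then fI i else Set.univ with hB'def
      have hB'G : ∀ i, MeasurableSet[G i] (B' i) := fun i => by
        by_cases hi : i ∈ t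
        · simpa [hB'def, hi] using hfI i hi
        · simp [hB'def, hi]
      have hB'm0 : ∀ i, MeasurableSet (B' i) := fun i => (hGim0 i t₀) _ (hB'G i)
      have hBeq : ⋂ x ∈ t, fI x = ⋂ i, B' i := by
        ext ω
        simp only [Set.mem_iInter, hB'def]
        constructor
        · intro hh i
          by_cases hi : i ∈ t
          · simpa [hi] using hh i hi
          · simp [hi]
        · intro hh x hx
          have := hh x
          rwa [if_pos hx] at this
      have hBm0 : MeasurableSet (⋂ x ∈ t, fI x) := by
        rw [hBeq]; exact MeasurableSet.iInter hB'm0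
      set g : Fin d → Ω → ℝ := fun i => (B' i).indicator (h i) with hgdef
      have hgSM : ∀ i, StronglyMeasurable[S i] (g i) := fun i =>
        (hhSM i).indicator (hGile i t₀ _ (hB'G i))
      have hgint : ∀ i, Integrable (g i) μ := fun i => (hhint i).indicator (hB'm0 i)
      have hprod := iIndep_integral_prod hSile hindep g hgSM hgint Finset.univ
      have hpt : (⋂ x ∈ t, fI x).indicator (fun ω => ∏ i, h i ω) = fun ω => ∏ i, g i ω := by
        funext ω
        by_cases hω : ω ∈ ⋂ i, B' i
        · rw [Set.indicator_of_mem (hBeq.symm ▸ hω)]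
          exact Finset.prod_congr rfl fun i _ =>
            (Set.indicator_of_mem (Set.mem_iInter.1 hω i) _).symm
        · rw [Set.indicator_of_notMem (fun hc => hω (hBeq ▸ hc))]
          have hex : ∃ i, ω ∉ B' i := by simpa [Set.mem_iInter] using hω
          obtain ⟨i, hi⟩ := hex
          exact (Finset.prod_eq_zero (Finset.mem_univ i)
            (Set.indicator_of_notMem hi _)).symm
      have hfactor : ∀ i : Fin d, ∫ ω, g i ω ∂μ = (μ (B' i ∩ A i)).toReal := by
        intro i
        have e1 : ∫ ω, g i ω ∂μ = ∫ ω in B' i, h i ω ∂μ := integral_indicator (hB'm0 i)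
        have e2 : ∫ ω in B' i, h i ω ∂μ =
            ∫ ω in B' i, (A i).indicator (fun _ => (1:ℝ)) ω ∂μ :=
          setIntegral_condExp (hGim0 i t₀) (hAint i) (hB'G i)
        have e3 : ∫ ω in B' i, (A i).indicator (fun _ => (1:ℝ)) ω ∂μ =
            (μ (B' i ∩ A i)).toReal := by
          rw [← integral_indicator (hB'm0 i), Set.indicator_indicator,
            integral_indicator_const _ ((hB'm0 i).inter (hAm0 i))]
          simp [measureReal_def]
        rw [e1, e2, e3]
      have hmeasInter : μ (⋂ i, (B' i ∩ A i)) = ∏ i, μ (B' i ∩ A i) :=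
        hindep.meas_iInter fun i => ((hGile i t₀ _ (hB'G i)).inter (hASi i))
      calc ∫ ω in ⋂ x ∈ t, fI x, (∏ i, h i ω) ∂μ
          = ∫ ω, (⋂ x ∈ t, fI x).indicator (fun ω => ∏ i, h i ω) ω ∂μ :=
            (integral_indicator hBm0).symm
        _ = ∫ ω, (∏ i, g i ω) ∂μ := by rw [hpt]
        _ = ∏ i, ∫ ω, g i ω ∂μ := hprod.2
        _ = ∏ i, (μ (B' i ∩ A i)).toReal := Finset.prod_congr rfl fun i _ => hfactor i
        _ = (μ (⋂ i, (B' i ∩ A i))).toReal := by rw [hmeasInter, ENNReal.toReal_prod]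
        _ = (μ ((⋂ x ∈ t, fI x) ∩ Cset)).toReal := by
            rw [Set.iInter_inter_distrib, ← hBeq, hCsetdef]
        _ = ∫ ω in ⋂ x ∈ t, fI x, Cset.indicator (fun _ => (1:ℝ)) ω ∂μ := by
            rw [← integral_indicator hBm0, Set.indicator_indicator,
              integral_indicator_const _ (hBm0.inter hCm0)]
            simp [measureReal_def]
    have hprodint : Integrable (fun ω => ∏ i, h i ω) μ :=
      (iIndep_integral_prod hSile hindep h hhSM hhint Finset.univ).1
    have htot : ∫ ω, (∏ i, h i ω) ∂μ = ∫ ω, Cset.indicator (fun _ => (1:ℝ)) ω ∂μ := by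
      have huniv : (Set.univ : Set Ω) ∈
          piiUnionInter (fun i => {s | MeasurableSet[G i] s}) Set.univ := by
        exact ⟨∅, by simp, fun _ => Set.univ, by simp, by simp⟩
      have := hbasic Set.univ huniv
      simpa [Measure.restrict_univ] using this
    -- extend to the whole σ-algebra by a Dynkin argument
    have hkey : ∀ B : Set Ω, MeasurableSet[natFilt Y t₀] B →
        ∫ ω in B, (∏ i, h i ω) ∂μ = ∫ ω in B, Cset.indicator (fun _ => (1:ℝ)) ω ∂μ := by
      intro B hB
      refine MeasurableSpace.induction_on_inter (m := natFilt Y t₀)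
        (C := fun B _ => ∫ ω in B, (∏ i, h i ω) ∂μ = ∫ ω in B, Cset.indicator (fun _ => (1:ℝ)) ω ∂μ)
        hgen
        (isPiSystem_piiUnionInter _ (fun i => @MeasurableSpace.isPiSystem_measurableSet Ω (G i)) _)
        (by simp) hbasic ?_ ?_ B hB
      · -- complement
        intro u hu hPu
        have hum0 : MeasurableSet u := hm _ hu
        have h1 := integral_add_compl hum0 hprodint
        have h2 := integral_add_compl hum0 hCint
        rw [← htot] at h2
        linarith
      · -- countable disjoint union
        intro fseq hdisj hmeasseq hPseq
        have hseqm0 : ∀ n, MeasurableSet (fseq n) := fun n => hm _ (hmeasseq n)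
        rw [integral_iUnion hseqm0 hdisj hprodint.integrableOn,
          integral_iUnion hseqm0 hdisj hCint.integrableOn]
        exact tsum_congr hPseq
    -- positivity of the conditional expectation of the indicator of Cset
    have hposC : ∀ᵐ ω ∂μ, 0 < (μ[Cset.indicator (fun _ => (1:ℝ)) | natFilt Y t₀]) ω := by
      refine condexp_pos_of_setIntegral_pos hm hCint ?_
      intro B hB hμB
      rw [← hkey B hB]
      exact setIntegral_pos_of_ae_pos hprodint hprodpos hμB
    -- inclusion of events
    have hsub : Cset ⊆ sbEvent Y t₀ T ε f := by
      intro ω hω t ht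
      have hterm : ∀ i : Fin d, ‖(Y t ω - Y t₀ ω - f t) i‖^2 ≤ ε'^2 := by
        intro i
        have h1 : |Y t ω i - Y t₀ ω i - f t i| < ε' := Set.mem_iInter.1 hω i t ht
        have h2 : (Y t ω - Y t₀ ω - f t) i = Y t ω i - Y t₀ ω i - f t i := by simp
        rw [h2, Real.norm_eq_abs]
        nlinarith [abs_nonneg (Y t ω i - Y t₀ ω i - f t i)]
      have hc : (0:ℝ) < (d:ℝ) + 1 := by positivity
      have hsum : ∑ i, ‖(Y t ω - Y t₀ ω - f t) i‖^2 ≤ (d:ℝ) * ε'^2 := by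
        calc ∑ i, ‖(Y t ω - Y t₀ ω - f t) i‖^2 ≤ ∑ _i : Fin d, ε'^2 :=
              Finset.sum_le_sum fun i _ => hterm i
          _ = (d:ℝ) * ε'^2 := by simp [mul_comm]
      have hlt : (d:ℝ) * ε'^2 < ε^2 := by
        have hd0 : (0:ℝ) ≤ (d:ℝ) := Nat.cast_nonneg d
        have hε2 : (0:ℝ) < ε^2 := by positivity
        have hq : (d:ℝ) < ((d:ℝ)+1)^2 := by nlinarith
        rw [hε'def, div_pow, mul_div_assoc']
        rw [div_lt_iff₀ (by positivity)]
        nlinarith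
      rw [EuclideanSpace.norm_eq]
      have : ∑ i, ‖(Y t ω - Y t₀ ω - f t) i‖^2 < ε^2 := lt_of_le_of_lt hsum hlt
      calc Real.sqrt (∑ i, ‖(Y t ω - Y t₀ ω - f t) i‖^2) < Real.sqrt (ε^2) :=
            Real.sqrt_lt_sqrt (by positivity) this
        _ = ε := by rw [Real.sqrt_sq hε.le]
    have hEmeas : MeasurableSet (sbEvent Y t₀ T ε f) :=
      measurableSet_sbEvent Y ht₀.2 ε f (fun ω => (hYcont ω).continuousOn) hf
        (fun t _ => (((hYmeas t).sub (hYmeas t₀)).sub measurable_const).norm)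
    have hEint : Integrable ((sbEvent Y t₀ T ε f).indicator (fun _ => (1:ℝ))) μ :=
      (integrable_const 1).indicator hEmeas
    have hle : Cset.indicator (fun _ => (1:ℝ)) ≤ᵐ[μ]
        (sbEvent Y t₀ T ε f).indicator (fun _ => (1:ℝ)) :=
      Filter.Eventually.of_forall
        (Set.indicator_le_indicator_of_subset hsub (fun _ => zero_le_one))
    have hmono := condExp_mono (m := natFilt Y t₀) hCint hEint hle
    filter_upwards [hposC, hmono] with ω h1 h2
    exact lt_of_lt_of_le h1 h2
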